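/- Let E be an m × n real matrix with nonnegative entries and let S be an n × n real matrix such that E * S = 0 and all off-diagonal entries of S are nonnegative (s_{jk} ≥ 0 for j ≠ k). Fix a row index i of E, and let J_i = {j : e_{ij} ≠ 0} and J_i^c = {k : e_{ik} = 0}. Then s_{jk} = 0 for every j ∈ J_i and every k ∈ J_i^c. -/
import Mathlib


theorem stmt0 {m n : ℕ} (E : Matrix (Fin m) (Fin n) ℝ) (S : Matrix (Fin n) (Fin n) ℝ)
    (hE : ∀ i j, 0 ≤ E i j) (hES : E * S = 0)
    (hoff : ∀ j k, j ≠ k → 0 ≤ S j k)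
    (i : Fin m) :
    ∀ j k, E i j ≠ 0 → E i k = 0 → S j k = 0 := by
  intro j k hj hk
  have hsum : ∑ l, E i l * S l k = 0 := by
    have := congrFun (congrFun hES i) k
    simpa [Matrix.mul_apply] using this
  have hnonneg : ∀ l ∈ Finset.univ, 0 ≤ E i l * S l k := by
    intro l _
    by_cases hlk : l = k
    · subst hlk; simp [hk]
    · exact mul_nonneg (hE i l) (hoff l k hlk)
  have hzero := (Finset.sum_eq_zero_iff_of_nonneg hnonneg).mp hsum j (Finset.mem_univ j)
  rcases mul_eq_zero.mp hzero with h | h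
  · exact absurd h hj
  · exact h
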